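/- Strong duality for the Wasserstein-2 worst-case quadratic objective (finite horizon): Let T ∈ ℝ^{r×d} be a nonzero matrix, let the nominal P° on ℝ^d have zero mean, finite second moment, and identity covariance, and let ρ > 0. Then sup{ ∫‖Tξ‖² dP(ξ) : P in the W₂-ball of radius ρ around P° } is finite and equals inf{ γρ² + γ·Tr[(I − γ⁻¹ T Tᵀ)⁻¹ − I] : γ ∈ ℝ, γ > ‖T‖_op² } (the condition γ > ‖T‖_op² being equivalent to γI − T Tᵀ ≻ 0). -/

import Mathlib

open Matrix MeasureTheory

noncomputable section

/-- Squared Euclidean norm of a finitely-indexed real vector. -/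
def sqNorm {ι : Type*} [Fintype ι] (x : ι → ℝ) : ℝ := ∑ i, (x i) ^ 2

/-- `P` lies in the `W₂`-ball of radius `ρ` around `P0`: `P` is a probability measure
with finite second moment and there is a coupling of `P` and `P0` of cost at most `ρ²`. -/
def MemW2Ball {ι : Type*} [Fintype ι] (P P0 : Measure (ι → ℝ)) (ρ : ℝ) : Prop :=
  IsProbabilityMeasure P ∧
  (∫⁻ ξ, ENNReal.ofReal (sqNorm ξ) ∂P) < ⊤ ∧
  ∃ μ : Measure ((ι → ℝ) × (ι → ℝ)), IsProbabilityMeasure μ ∧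
    μ.map Prod.fst = P ∧ μ.map Prod.snd = P0 ∧
    (∫⁻ xy, ENNReal.ofReal (sqNorm fun i => xy.1 i - xy.2 i) ∂μ) ≤ ENNReal.ofReal (ρ ^ 2)

/-- The nominal distribution: a probability measure with finite second moment,
zero mean, and identity covariance. -/
def IsNominal {ι : Type*} [Fintype ι] [DecidableEq ι] (P0 : Measure (ι → ℝ)) : Prop :=
  IsProbabilityMeasure P0 ∧ Integrable (fun ξ => sqNorm ξ) P0 ∧
  (∀ i, (∫ ξ, ξ i ∂P0) = 0) ∧
  (∀ i j, (∫ ξ, ξ i * ξ j ∂P0) = if i = j then (1 : ℝ) else 0)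

/-- The set of worst-case mean-squared-error values `∫‖Tξ‖² dP` for `P` ranging over
the `W₂`-ball of radius `ρ` around `P0`. -/
def wcSet {ι : Type*} [Fintype ι] {r : ℕ} (T : Matrix (Fin r) ι ℝ)
    (P0 : Measure (ι → ℝ)) (ρ : ℝ) : Set ℝ :=
  {e | ∃ P, MemW2Ball P P0 ρ ∧ e = ∫ ξ, sqNorm (T.mulVec ξ) ∂P}

/-- The squared operator (spectral) norm of a real matrix `T`, characterized as the least
`c ≥ 0` with `c·I − TᵀT ⪰ 0`. -/
def opNormSq {r d : ℕ} (T : Matrix (Fin r) (Fin d) ℝ) : ℝ :=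
  sInf {c : ℝ | 0 ≤ c ∧ (c • (1 : Matrix (Fin d) (Fin d) ℝ) - Tᵀ * T).PosSemidef}

namespace WcAux


lemma sqNorm_eq_dot {ι : Type*} [Fintype ι] (x : ι → ℝ) : sqNorm x = x ⬝ᵥ x := by
  simp [sqNorm, dotProduct, pow_two]

lemma sqNorm_nonneg {ι : Type*} [Fintype ι] (x : ι → ℝ) : 0 ≤ sqNorm x :=
  Finset.sum_nonneg fun i _ => sq_nonneg _

lemma dot_symm {d : ℕ} (M : Matrix (Fin d) (Fin d) ℝ) (hM : Mᵀ = M) (v w : Fin d → ℝ) :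
    v ⬝ᵥ M.mulVec w = w ⬝ᵥ M.mulVec v := by
  rw [Matrix.dotProduct_mulVec, ← Matrix.mulVec_transpose, hM, dotProduct_comm]

lemma sqNorm_mulVec {r d : ℕ} (M : Matrix (Fin r) (Fin d) ℝ) (x : Fin d → ℝ) :
    sqNorm (M.mulVec x) = x ⬝ᵥ (Mᵀ * M).mulVec x := by
  rw [sqNorm_eq_dot, ← Matrix.mulVec_mulVec, Matrix.dotProduct_mulVec x Mᵀ,
    Matrix.vecMul_transpose]

lemma sqNorm_mulVec_le {r d : ℕ} (M : Matrix (Fin r) (Fin d) ℝ) (x : Fin d → ℝ) :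
    sqNorm (M.mulVec x) ≤ (∑ i, ∑ j, (M i j)^2) * sqNorm x := by
  unfold sqNorm
  rw [Finset.sum_mul]
  refine Finset.sum_le_sum fun i _ => ?_
  simpa [Matrix.mulVec, dotProduct] using Finset.sum_mul_sq_le_sq_mul_sq Finset.univ (M i) x



section Conj
variable {d : ℕ} (U : Matrix (Fin d) (Fin d) ℝ)

/-- conjugation of a diagonal matrix by `U`. -/
def conjD (f : Fin d → ℝ) : Matrix (Fin d) (Fin d) ℝ := U * diagonal f * star U

lemma conjD_mul (hU : star U * U = 1) (f g : Fin d → ℝ) :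
    conjD U f * conjD U g = conjD U (fun i => f i * g i) := by
  unfold conjD
  rw [← diagonal_mul_diagonal]
  calc U * diagonal f * star U * (U * diagonal g * star U)
      = U * diagonal f * (star U * U) * diagonal g * star U := by
        simp only [Matrix.mul_assoc]
    _ = U * (diagonal f * diagonal g) * star U := by rw [hU]; simp only [Matrix.mul_assoc, Matrix.mul_one, Matrix.one_mul]

lemma conjD_one (hU' : U * star U = 1) : conjD U (fun _ => 1) = 1 := by
  unfold conjD
  have : (diagonal (fun _ => (1:ℝ)) : Matrix (Fin d) (Fin d) ℝ) = 1 := Matrix.diagonal_one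
  rw [this, Matrix.mul_one, hU']

lemma conjD_add (f g : Fin d → ℝ) :
    conjD U f + conjD U g = conjD U (fun i => f i + g i) := by
  unfold conjD
  have : (diagonal fun i => f i + g i) = diagonal f + diagonal g := by
    rw [diagonal_add]
  rw [this, Matrix.mul_add, Matrix.add_mul]

lemma conjD_smul (c : ℝ) (f : Fin d → ℝ) : c • conjD U f = conjD U (fun i => c * f i) := by
  unfold conjD
  have : (diagonal fun i => c * f i) = c • diagonal f := by
    have h2 : (fun i => c * f i) = c • f := rfl
    rw [h2, Matrix.diagonal_smul]
  rw [this, Matrix.mul_smul, Matrix.smul_mul]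

lemma conjD_sub (f g : Fin d → ℝ) :
    conjD U f - conjD U g = conjD U (fun i => f i - g i) := by
  unfold conjD
  have : (diagonal fun i => f i - g i) = diagonal f - diagonal g := by
    rw [diagonal_sub]
  rw [this, Matrix.mul_sub, Matrix.sub_mul]

lemma trace_conjD (hU : star U * U = 1) (f : Fin d → ℝ) :
    (conjD U f).trace = ∑ i, f i := by
  unfold conjD
  rw [Matrix.trace_mul_cycle, hU, Matrix.one_mul, trace_diagonal]

lemma conjD_transpose (f : Fin d → ℝ) : (conjD U f)ᵀ = conjD U f := by
  have h : (conjD U f)ᴴ = conjD U f := by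
    unfold conjD
    rw [Matrix.conjTranspose_mul, Matrix.conjTranspose_mul, Matrix.star_eq_conjTranspose,
      Matrix.conjTranspose_conjTranspose, Matrix.diagonal_conjTranspose]
    have : star (f : Fin d → ℝ) = f := by
      funext i; simp
    rw [this, Matrix.mul_assoc]
  rw [← Matrix.conjTranspose_eq_transpose_of_trivial, h]

lemma conjD_posSemidef (f : Fin d → ℝ) (hf : ∀ i, 0 ≤ f i) : (conjD U f).PosSemidef := by
  have h : (diagonal f).PosSemidef := Matrix.PosSemidef.diagonal hf
  simpa [conjD, Matrix.star_eq_conjTranspose, Matrix.mul_assoc] using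
    h.mul_mul_conjTranspose_same U

lemma posSemidef_conjD (hU : star U * U = 1) (f : Fin d → ℝ)
    (h : (conjD U f).PosSemidef) : ∀ i, 0 ≤ f i := by
  have h2 := h.conjTranspose_mul_mul_same U
  have he : Uᴴ * conjD U f * U = diagonal f := by
    unfold conjD
    rw [← Matrix.star_eq_conjTranspose]
    calc star U * (U * diagonal f * star U) * U
        = (star U * U) * diagonal f * (star U * U) := by simp only [Matrix.mul_assoc]
      _ = diagonal f := by rw [hU]; simp
  rw [he] at h2
  exact Matrix.posSemidef_diagonal_iff.mp h2

end Conj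


lemma pointwise_ineq {r d : ℕ} (T : Matrix (Fin r) (Fin d) ℝ) {γ : ℝ}
    {B : Matrix (Fin d) (Fin d) ℝ}
    (hS : ((γ • 1 : Matrix (Fin d) (Fin d) ℝ) - Tᵀ * T).PosSemidef)
    (h1 : ((γ • 1 : Matrix (Fin d) (Fin d) ℝ) - Tᵀ * T) * B = 1)
    (h2 : B * ((γ • 1 : Matrix (Fin d) (Fin d) ℝ) - Tᵀ * T) = 1)
    (hBt : Bᵀ = B) (x y : Fin d → ℝ) :
    sqNorm (T.mulVec x) ≤ γ * sqNorm (x - y) + γ * (y ⬝ᵥ ((Tᵀ * T) * B).mulVec y) := by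
  set A := Tᵀ * T with hA
  have hAt : Aᵀ = A := by rw [hA, Matrix.transpose_mul, Matrix.transpose_transpose]
  have hgB : γ • B = 1 + A * B := by
    have := h1
    rw [Matrix.sub_mul, Matrix.smul_mul, Matrix.one_mul] at this
    linear_combination (norm := abel) this
  have hgB' : γ • B = 1 + B * A := by
    have := h2
    rw [Matrix.mul_sub, Matrix.mul_smul, Matrix.mul_one] at this
    linear_combination (norm := abel) this
  have hBA : B * A = A * B := by
    have h0 := hgB'.symm.trans hgB
    exact (add_right_injective _ h0)
  have hABt : (A * B)ᵀ = A * B := by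
    rw [Matrix.transpose_mul, hBt, hAt, hBA]
  have hzero : (A*B)*(A*B) + A*B - γ • (B*(A*B)) = 0 := by
    have h3 : γ • (B*(A*B)) = (1 + A*B)*(A*B) := by
      rw [← hgB, Matrix.smul_mul]
    rw [h3]
    noncomm_ring
  set u := B.mulVec y with hu
  set w := (A*B).mulVec y with hw
  set z := x - γ • u with hz
  have e2 : x = z + γ • u := by rw [hz]; abel
  have e1 : x - y = z + w := by
    rw [e2, hw]
    have h9 : γ • u - y = (A*B).mulVec y := by
      have h8 : (γ • B : Matrix (Fin d) (Fin d) ℝ) - 1 = A * B := by rw [hgB]; abel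
      rw [hu, ← Matrix.smul_mulVec, ← h8, Matrix.sub_mulVec, Matrix.one_mulVec]
    rw [← h9]
    abel
  have e3 : A.mulVec x = A.mulVec z + γ • w := by
    rw [e2, Matrix.mulVec_add, Matrix.mulVec_smul, hw, hu, Matrix.mulVec_mulVec]
  have huAz : u ⬝ᵥ A.mulVec z = z ⬝ᵥ w := by
    rw [dot_symm A hAt, hu, hw, Matrix.mulVec_mulVec]
  have e4 : (x - y) ⬝ᵥ (x - y) = z ⬝ᵥ z + 2*(z ⬝ᵥ w) + w ⬝ᵥ w := by
    rw [e1]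
    simp only [add_dotProduct, dotProduct_add, dotProduct_comm w z]
    ring
  have e5 : x ⬝ᵥ A.mulVec x = z ⬝ᵥ A.mulVec z + 2*γ*(z ⬝ᵥ w) + γ^2 * (u ⬝ᵥ w) := by
    rw [e3, e2]
    simp only [add_dotProduct, dotProduct_add, dotProduct_smul, smul_dotProduct, smul_eq_mul,
      huAz]
    ring
  have e6 : w ⬝ᵥ w = y ⬝ᵥ ((A*B)*(A*B)).mulVec y := by
    calc w ⬝ᵥ w = w ⬝ᵥ (A*B).mulVec y := by rw [← hw]
      _ = y ⬝ᵥ (A*B).mulVec w := dot_symm _ hABt _ _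
      _ = y ⬝ᵥ ((A*B)*(A*B)).mulVec y := by rw [hw, Matrix.mulVec_mulVec]
  have e7 : u ⬝ᵥ w = y ⬝ᵥ (B*(A*B)).mulVec y := by
    have h7 : (A*B)*B = B*(A*B) := by conv_rhs => rw [← Matrix.mul_assoc, hBA]
    calc u ⬝ᵥ w = u ⬝ᵥ (A*B).mulVec y := by rw [← hw]
      _ = y ⬝ᵥ (A*B).mulVec u := dot_symm _ hABt _ _
      _ = y ⬝ᵥ ((A*B)*B).mulVec y := by rw [hu, Matrix.mulVec_mulVec]
      _ = y ⬝ᵥ (B*(A*B)).mulVec y := by rw [h7]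
  have e8 : γ*(w ⬝ᵥ w) + γ*(y ⬝ᵥ (A*B).mulVec y) - γ^2*(u ⬝ᵥ w) = 0 := by
    rw [e6, e7]
    have := congrArg (fun M : Matrix (Fin d) (Fin d) ℝ => γ * (y ⬝ᵥ M.mulVec y)) hzero
    simp only [Matrix.add_mulVec, Matrix.sub_mulVec, Matrix.smul_mulVec,
      dotProduct_add, dotProduct_sub, dotProduct_smul, smul_eq_mul, Matrix.zero_mulVec,
      dotProduct_zero, mul_zero] at this
    ring_nf
    ring_nf at this
    linarith
  have e9 : z ⬝ᵥ ((γ • 1 - A) : Matrix (Fin d) (Fin d) ℝ).mulVec z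
      = γ*(z ⬝ᵥ z) - z ⬝ᵥ A.mulVec z := by
    rw [Matrix.sub_mulVec, dotProduct_sub, Matrix.smul_mulVec, Matrix.one_mulVec,
      dotProduct_smul, smul_eq_mul]
  have hnn : 0 ≤ z ⬝ᵥ ((γ • 1 - A) : Matrix (Fin d) (Fin d) ℝ).mulVec z := by
    have := hS.dotProduct_mulVec_nonneg z
    rwa [star_trivial] at this
  rw [sqNorm_mulVec, ← hA, sqNorm_eq_dot]
  rw [e9] at hnn
  rw [e4] at *
  linarith [e5, e8, hnn]



lemma continuous_sqNorm {ι : Type*} [Fintype ι] : Continuous (sqNorm (ι := ι)) := by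
  unfold sqNorm
  exact continuous_finset_sum _ fun i _ => (continuous_apply i).pow 2

lemma continuous_mulVec {r d : ℕ} (M : Matrix (Fin r) (Fin d) ℝ) :
    Continuous (fun x : Fin d → ℝ => M.mulVec x) := by
  refine continuous_pi fun i => ?_
  unfold Matrix.mulVec dotProduct
  exact continuous_finset_sum _ fun j _ => (continuous_const.mul (continuous_apply j))

lemma continuous_quad {d : ℕ} (M : Matrix (Fin d) (Fin d) ℝ) :
    Continuous (fun y : Fin d → ℝ => y ⬝ᵥ M.mulVec y) := by
  unfold Matrix.mulVec dotProduct
  refine continuous_finset_sum _ fun i _ => (continuous_apply i).mul ?_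
  exact continuous_finset_sum _ fun j _ => (continuous_const.mul (continuous_apply j))

lemma integrable_entry_mul {d : ℕ} {P0 : Measure (Fin d → ℝ)} (hP0 : IsNominal P0)
    (i j : Fin d) : Integrable (fun y : Fin d → ℝ => y i * y j) P0 := by
  refine (hP0.2.1.const_mul 2).mono' ?_ ?_
  · exact (((measurable_pi_apply i).mul (measurable_pi_apply j)).aestronglyMeasurable)
  · refine Filter.Eventually.of_forall fun y => ?_
    have h1 : (y i)^2 ≤ sqNorm y := Finset.single_le_sum (f := fun k => (y k)^2)
      (fun k _ => sq_nonneg _) (Finset.mem_univ i)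
    have h2 : (y j)^2 ≤ sqNorm y := Finset.single_le_sum (f := fun k => (y k)^2)
      (fun k _ => sq_nonneg _) (Finset.mem_univ j)
    have : |y i * y j| ≤ (y i)^2 + (y j)^2 := by nlinarith [abs_mul_abs_self (y i), sq_abs (y i), sq_abs (y j), abs_mul (y i) (y j), abs_nonneg (y i * y j), sq_nonneg (|y i| - |y j|)]
    calc ‖y i * y j‖ = |y i * y j| := rfl
      _ ≤ (y i)^2 + (y j)^2 := this
      _ ≤ 2 * sqNorm y := by linarith

lemma integrable_quadForm {d : ℕ} {P0 : Measure (Fin d → ℝ)} (hP0 : IsNominal P0)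
    (M : Matrix (Fin d) (Fin d) ℝ) :
    Integrable (fun y : Fin d → ℝ => y ⬝ᵥ M.mulVec y) P0 := by
  have hrw : (fun y : Fin d → ℝ => y ⬝ᵥ M.mulVec y)
      = fun y => ∑ i, ∑ j, M i j * (y i * y j) := by
    funext y
    simp only [dotProduct, Matrix.mulVec, Finset.mul_sum]
    exact Finset.sum_congr rfl fun i _ => Finset.sum_congr rfl fun j _ => by ring
  rw [hrw]
  exact integrable_finset_sum _ fun i _ => integrable_finset_sum _ fun j _ =>
    (integrable_entry_mul hP0 i j).const_mul _

lemma integral_quadForm {d : ℕ} {P0 : Measure (Fin d → ℝ)} (hP0 : IsNominal P0)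
    (M : Matrix (Fin d) (Fin d) ℝ) :
    ∫ y, y ⬝ᵥ M.mulVec y ∂P0 = M.trace := by
  have hrw : (fun y : Fin d → ℝ => y ⬝ᵥ M.mulVec y)
      = fun y => ∑ i, ∑ j, M i j * (y i * y j) := by
    funext y
    simp only [dotProduct, Matrix.mulVec, Finset.mul_sum]
    exact Finset.sum_congr rfl fun i _ => Finset.sum_congr rfl fun j _ => by ring
  rw [hrw]
  rw [integral_finset_sum _ (f := fun i (y : Fin d → ℝ) => ∑ j, M i j * (y i * y j)) fun i _ => integrable_finset_sum _ fun j _ =>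
    (integrable_entry_mul hP0 i j).const_mul _]
  have : ∀ i, (∫ y, ∑ j, M i j * (y i * y j) ∂P0) = M i i := by
    intro i
    rw [integral_finset_sum _ fun j _ => (integrable_entry_mul hP0 i j).const_mul _]
    have : ∀ j, (∫ y, M i j * (y i * y j) ∂P0) = if i = j then M i j else 0 := by
      intro j
      rw [MeasureTheory.integral_const_mul, hP0.2.2.2 i j]
      split <;> simp
    simp only [this, Finset.sum_ite_eq, Finset.mem_univ, if_true]
  simp only [this, Matrix.trace, Matrix.diag]

/-- a measure with finite second moment integrates `sqNorm`. -/
lemma integrable_sqNorm_of_lt_top {d : ℕ} {Q : Measure (Fin d → ℝ)}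
    (h : (∫⁻ ξ, ENNReal.ofReal (sqNorm ξ) ∂Q) < ⊤) :
    Integrable (fun ξ : Fin d → ℝ => sqNorm ξ) Q := by
  refine ⟨continuous_sqNorm.aestronglyMeasurable, ?_⟩
  rw [hasFiniteIntegral_iff_ofReal (Filter.Eventually.of_forall fun y => sqNorm_nonneg y)]
  exact h

lemma sqNorm_mulVec_le' {r d : ℕ} (M : Matrix (Fin r) (Fin d) ℝ) (x : Fin d → ℝ) :
    sqNorm (M.mulVec x) ≤ (∑ i, ∑ j, (M i j)^2) * sqNorm x := by
  unfold sqNorm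
  rw [Finset.sum_mul]
  refine Finset.sum_le_sum fun i _ => ?_
  simpa [Matrix.mulVec, dotProduct] using Finset.sum_mul_sq_le_sq_mul_sq Finset.univ (M i) x

lemma integrable_sqNorm_mulVec {r d : ℕ} {Q : Measure (Fin d → ℝ)}
    (h : Integrable (fun ξ : Fin d → ℝ => sqNorm ξ) Q) (M : Matrix (Fin r) (Fin d) ℝ) :
    Integrable (fun ξ : Fin d → ℝ => sqNorm (M.mulVec ξ)) Q := by
  refine (h.const_mul (∑ i, ∑ j, (M i j)^2)).mono'
    ((continuous_sqNorm.comp (continuous_mulVec M)).aestronglyMeasurable) ?_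
  refine Filter.Eventually.of_forall fun y => ?_
  rw [Real.norm_eq_abs, abs_of_nonneg (sqNorm_nonneg _)]
  exact sqNorm_mulVec_le' M y


lemma dual_inv_eq {r d : ℕ} (T : Matrix (Fin r) (Fin d) ℝ) {γ : ℝ} (hγ : γ ≠ 0)
    {B : Matrix (Fin d) (Fin d) ℝ}
    (h1 : ((γ • 1 : Matrix (Fin d) (Fin d) ℝ) - Tᵀ * T) * B = 1) :
    ((1 : Matrix (Fin r) (Fin r) ℝ) - γ⁻¹ • (T * Tᵀ))⁻¹ = 1 + T * B * Tᵀ := by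
  apply Matrix.inv_eq_right_inv
  have hAB : (Tᵀ*T)*B = γ•B - 1 := by
    have h5 := h1
    rw [Matrix.sub_mul, Matrix.smul_mul, Matrix.one_mul] at h5
    have h6 : γ•B = 1 + Tᵀ*T*B := sub_eq_iff_eq_add.mp h5
    rw [h6]
    abel
  have key : T*Tᵀ*(1 + T*B*Tᵀ) = γ•(T*B*Tᵀ) := by
    rw [Matrix.mul_add, Matrix.mul_one]
    have : T*Tᵀ*(T*B*Tᵀ) = T*((Tᵀ*T)*B)*Tᵀ := by
      simp only [Matrix.mul_assoc]
    rw [this, hAB, Matrix.mul_sub, Matrix.sub_mul, Matrix.mul_smul, Matrix.smul_mul,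
      Matrix.mul_one]
    abel
  rw [Matrix.sub_mul, Matrix.one_mul, Matrix.smul_mul, key, smul_smul,
    inv_mul_cancel₀ hγ, one_smul]
  abel

lemma dual_trace_eq {r d : ℕ} (T : Matrix (Fin r) (Fin d) ℝ) {γ : ℝ} (hγ : γ ≠ 0)
    {B : Matrix (Fin d) (Fin d) ℝ}
    (h1 : ((γ • 1 : Matrix (Fin d) (Fin d) ℝ) - Tᵀ * T) * B = 1) :
    (((1 : Matrix (Fin r) (Fin r) ℝ) - γ⁻¹ • (T * Tᵀ))⁻¹ - 1).trace
      = ((Tᵀ*T) * B).trace := by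
  rw [dual_inv_eq T hγ h1]
  have : (1 + T * B * Tᵀ - 1 : Matrix (Fin r) (Fin r) ℝ) = T * B * Tᵀ := by abel
  rw [this, Matrix.trace_mul_cycle]

lemma weak_duality {r d : ℕ} (T : Matrix (Fin r) (Fin d) ℝ) {P0 P : Measure (Fin d → ℝ)}
    (hP0 : IsNominal P0) {ρ γ : ℝ} (hρ : 0 ≤ ρ) (hγ : 0 ≤ γ) (hmem : MemW2Ball P P0 ρ)
    {B : Matrix (Fin d) (Fin d) ℝ}
    (hS : ((γ • 1 : Matrix (Fin d) (Fin d) ℝ) - Tᵀ * T).PosSemidef)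
    (h1 : ((γ • 1 : Matrix (Fin d) (Fin d) ℝ) - Tᵀ * T) * B = 1)
    (h2 : B * ((γ • 1 : Matrix (Fin d) (Fin d) ℝ) - Tᵀ * T) = 1)
    (hBt : Bᵀ = B) :
    ∫ ξ, sqNorm (T.mulVec ξ) ∂P ≤ γ * ρ^2 + γ * ((Tᵀ*T) * B).trace := by
  obtain ⟨hPprob, hPmom, μ, hμprob, hfst, hsnd, hcost⟩ := hmem
  have hint_P : Integrable (fun ξ => sqNorm (T.mulVec ξ)) P :=
    integrable_sqNorm_mulVec (integrable_sqNorm_of_lt_top hPmom) T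
  have hc1 : Continuous (fun w : (Fin d → ℝ) × (Fin d → ℝ) => sqNorm (T.mulVec w.1)) :=
    continuous_sqNorm.comp ((continuous_mulVec T).comp continuous_fst)
  have hc2 : Continuous (fun w : (Fin d → ℝ) × (Fin d → ℝ) => sqNorm (w.1 - w.2)) :=
    continuous_sqNorm.comp (continuous_fst.sub continuous_snd)
  have hc3 : Continuous (fun w : (Fin d → ℝ) × (Fin d → ℝ) =>
      w.2 ⬝ᵥ ((Tᵀ*T)*B).mulVec w.2) := (continuous_quad ((Tᵀ*T)*B)).comp continuous_snd
  have hgc : Continuous (fun ξ : Fin d → ℝ => sqNorm (T.mulVec ξ)) :=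
    continuous_sqNorm.comp (continuous_mulVec T)
  have hqc : Continuous (fun y : Fin d → ℝ => γ * (y ⬝ᵥ ((Tᵀ*T)*B).mulVec y)) :=
    continuous_const.mul (continuous_quad _)
  -- transfer the integral to the coupling
  have hV : ∫ ξ, sqNorm (T.mulVec ξ) ∂P = ∫ w, sqNorm (T.mulVec w.1) ∂μ := by
    rw [← hfst, integral_map measurable_fst.aemeasurable hgc.aestronglyMeasurable]
  -- integrability of the three functions on the product space
  have hf1int : Integrable (fun w : (Fin d → ℝ) × (Fin d → ℝ) => sqNorm (T.mulVec w.1)) μ := by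
    have := (integrable_map_measure hgc.aestronglyMeasurable measurable_fst.aemeasurable).mp
      (by rw [hfst]; exact hint_P)
    exact this
  have hsub_eq : ∀ w : (Fin d → ℝ) × (Fin d → ℝ),
      sqNorm (fun i => w.1 i - w.2 i) = sqNorm (w.1 - w.2) := fun w => rfl
  have hf2aint : Integrable (fun w : (Fin d → ℝ) × (Fin d → ℝ) => sqNorm (w.1 - w.2)) μ := by
    refine ⟨hc2.aestronglyMeasurable, ?_⟩
    rw [hasFiniteIntegral_iff_ofReal (Filter.Eventually.of_forall fun w => sqNorm_nonneg _)]
    refine lt_of_le_of_lt ?_ (lt_of_le_of_lt hcost (ENNReal.ofReal_lt_top))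
    refine le_of_eq (lintegral_congr fun w => ?_)
    rw [hsub_eq]
  have hf3int : Integrable (fun w : (Fin d → ℝ) × (Fin d → ℝ) =>
      γ * (w.2 ⬝ᵥ ((Tᵀ*T)*B).mulVec w.2)) μ := by
    have h0 : Integrable (fun y : Fin d → ℝ => γ * (y ⬝ᵥ ((Tᵀ*T)*B).mulVec y)) P0 :=
      (integrable_quadForm hP0 _).const_mul γ
    have := (integrable_map_measure hqc.aestronglyMeasurable measurable_snd.aemeasurable).mp
      (by rw [hsnd]; exact h0)
    exact this
  -- pointwise bound
  have hptw : ∀ w : (Fin d → ℝ) × (Fin d → ℝ), sqNorm (T.mulVec w.1)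
      ≤ γ * sqNorm (w.1 - w.2) + γ * (w.2 ⬝ᵥ ((Tᵀ*T)*B).mulVec w.2) :=
    fun w => pointwise_ineq T hS h1 h2 hBt w.1 w.2
  -- integrate
  have hmain : ∫ w, sqNorm (T.mulVec w.1) ∂μ
      ≤ ∫ w, (γ * sqNorm (w.1 - w.2) + γ * (w.2 ⬝ᵥ ((Tᵀ*T)*B).mulVec w.2)) ∂μ :=
    integral_mono hf1int ((hf2aint.const_mul γ).add hf3int) hptw
  rw [integral_add (hf2aint.const_mul γ) hf3int] at hmain
  -- bound the transport term
  have hterm2 : ∫ w, γ * sqNorm (w.1 - w.2) ∂μ ≤ γ * ρ^2 := by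
    rw [MeasureTheory.integral_const_mul]
    refine mul_le_mul_of_nonneg_left ?_ hγ
    have heq : ∫ w, sqNorm (w.1 - w.2) ∂μ
        = (∫⁻ w, ENNReal.ofReal (sqNorm (w.1 - w.2)) ∂μ).toReal := by
      exact integral_eq_lintegral_of_nonneg_ae
        (Filter.Eventually.of_forall fun w => sqNorm_nonneg _) hc2.aestronglyMeasurable
    rw [heq]
    have hle : (∫⁻ w, ENNReal.ofReal (sqNorm (w.1 - w.2)) ∂μ) ≤ ENNReal.ofReal (ρ^2) := by
      refine le_trans (le_of_eq (lintegral_congr fun w => ?_)) hcost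
      rw [hsub_eq]
    calc (∫⁻ w, ENNReal.ofReal (sqNorm (w.1 - w.2)) ∂μ).toReal
        ≤ (ENNReal.ofReal (ρ^2)).toReal := ENNReal.toReal_mono ENNReal.ofReal_ne_top hle
      _ = ρ^2 := ENNReal.toReal_ofReal (by positivity)
  -- identify the quadratic term
  have hterm3 : ∫ w, γ * (w.2 ⬝ᵥ ((Tᵀ*T)*B).mulVec w.2) ∂μ = γ * ((Tᵀ*T)*B).trace := by
    have : ∫ w, γ * (w.2 ⬝ᵥ ((Tᵀ*T)*B).mulVec w.2) ∂μ
        = ∫ y, γ * (y ⬝ᵥ ((Tᵀ*T)*B).mulVec y) ∂P0 := by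
      rw [← hsnd, integral_map measurable_snd.aemeasurable hqc.aestronglyMeasurable]
    rw [this, MeasureTheory.integral_const_mul, integral_quadForm hP0]
  rw [hV]
  calc ∫ w, sqNorm (T.mulVec w.1) ∂μ
      ≤ (∫ w, γ * sqNorm (w.1 - w.2) ∂μ) + ∫ w, γ * (w.2 ⬝ᵥ ((Tᵀ*T)*B).mulVec w.2) ∂μ := hmain
    _ ≤ γ * ρ^2 + γ * ((Tᵀ*T)*B).trace := by rw [hterm3]; linarith [hterm2]

lemma quad_eq_sqNorm {d : ℕ} (M : Matrix (Fin d) (Fin d) ℝ) :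
    ∀ y : Fin d → ℝ, sqNorm (M.mulVec y) = y ⬝ᵥ (Mᵀ * M).mulVec y :=
  fun y => sqNorm_mulVec M y

lemma primal_value {r d : ℕ} (T : Matrix (Fin r) (Fin d) ℝ) {P0 : Measure (Fin d → ℝ)}
    (hP0 : IsNominal P0) {ρ : ℝ} (hρ : 0 ≤ ρ) (L : Matrix (Fin d) (Fin d) ℝ)
    (hcost : ((L - 1)ᵀ * (L - 1)).trace ≤ ρ^2) :
    MemW2Ball (P0.map (fun y => L.mulVec y)) P0 ρ ∧
    ∫ ξ, sqNorm (T.mulVec ξ) ∂(P0.map (fun y => L.mulVec y)) = ((T*L)ᵀ*(T*L)).trace := by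
  haveI : IsProbabilityMeasure P0 := hP0.1
  have hLm : Measurable (fun y : Fin d → ℝ => L.mulVec y) := (continuous_mulVec L).measurable
  have hpair : Measurable (fun y : Fin d → ℝ => (L.mulVec y, y)) := hLm.prodMk measurable_id
  have hintL : Integrable (fun y : Fin d → ℝ => sqNorm (L.mulVec y)) P0 :=
    integrable_sqNorm_mulVec hP0.2.1 L
  have hmom : (∫⁻ ξ, ENNReal.ofReal (sqNorm ξ) ∂(P0.map (fun y => L.mulVec y))) < ⊤ := by
    have hom : Measurable fun ξ : Fin d → ℝ => ENNReal.ofReal (sqNorm ξ) :=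
      continuous_sqNorm.measurable.ennreal_ofReal
    rw [lintegral_map' hom.aemeasurable hLm.aemeasurable]
    rw [← ofReal_integral_eq_lintegral_ofReal hintL
      (Filter.Eventually.of_forall fun y => sqNorm_nonneg _)]
    exact ENNReal.ofReal_lt_top
  have hvalue : ∫ ξ, sqNorm (T.mulVec ξ) ∂(P0.map (fun y => L.mulVec y))
      = ((T*L)ᵀ*(T*L)).trace := by
    have hgc : Continuous fun ξ : Fin d → ℝ => sqNorm (T.mulVec ξ) :=
      continuous_sqNorm.comp (continuous_mulVec T)
    rw [integral_map hLm.aemeasurable hgc.aestronglyMeasurable]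
    have : ∀ y : Fin d → ℝ, sqNorm (T.mulVec (L.mulVec y)) = y ⬝ᵥ ((T*L)ᵀ*(T*L)).mulVec y := by
      intro y
      rw [Matrix.mulVec_mulVec, sqNorm_mulVec]
    simp_rw [this]
    exact integral_quadForm hP0 _
  refine ⟨⟨Measure.isProbabilityMeasure_map hLm.aemeasurable, hmom, P0.map (fun y => (L.mulVec y, y)),
    Measure.isProbabilityMeasure_map hpair.aemeasurable, ?_, ?_, ?_⟩, hvalue⟩
  · rw [Measure.map_map measurable_fst hpair]
    rfl
  · rw [Measure.map_map measurable_snd hpair]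
    exact Measure.map_id
  · have hmeas : Measurable (fun w : (Fin d → ℝ) × (Fin d → ℝ) =>
        ENNReal.ofReal (sqNorm fun i => w.1 i - w.2 i)) := by
      refine ENNReal.measurable_ofReal.comp ?_
      exact (continuous_sqNorm.comp (continuous_fst.sub continuous_snd)).measurable
    rw [lintegral_map' hmeas.aemeasurable hpair.aemeasurable]
    have heq : ∀ y : Fin d → ℝ, (sqNorm fun i => L.mulVec y i - y i)
        = y ⬝ᵥ ((L-1)ᵀ*(L-1)).mulVec y := by
      intro y
      have h0 : (fun i => L.mulVec y i - y i) = (L - 1).mulVec y := by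
        funext i
        rw [Matrix.sub_mulVec, Matrix.one_mulVec]
        rfl
      rw [h0, sqNorm_mulVec]
    simp_rw [heq]
    have hql : Integrable (fun y : Fin d → ℝ => y ⬝ᵥ ((L-1)ᵀ*(L-1)).mulVec y) P0 :=
      integrable_quadForm hP0 _
    have hnn : 0 ≤ᵐ[P0] fun y : Fin d → ℝ => y ⬝ᵥ ((L-1)ᵀ*(L-1)).mulVec y := by
      refine Filter.Eventually.of_forall fun y => ?_
      have h9 : (0:ℝ) ≤ sqNorm ((L-1).mulVec y) := sqNorm_nonneg _
      rw [sqNorm_mulVec] at h9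
      simpa using h9
    rw [← ofReal_integral_eq_lintegral_ofReal hql hnn, integral_quadForm hP0]
    exact ENNReal.ofReal_le_ofReal hcost
end WcAux

open WcAux

/-- Strong duality for the Wasserstein-2 worst-case quadratic objective (finite horizon). -/
theorem stmt_4 {r d : ℕ} (T : Matrix (Fin r) (Fin d) ℝ) (hT : T ≠ 0)
    (P0 : Measure (Fin d → ℝ)) (hP0 : IsNominal P0) (ρ : ℝ) (hρ : 0 < ρ) :
    (wcSet T P0 ρ).Nonempty ∧ BddAbove (wcSet T P0 ρ) ∧
      sSup (wcSet T P0 ρ) =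
        sInf {v : ℝ | ∃ γ : ℝ, opNormSq T < γ ∧
          v = γ * ρ ^ 2 +
              γ * (((1 : Matrix (Fin r) (Fin r) ℝ) - γ⁻¹ • (T * Tᵀ))⁻¹ - 1).trace} := by
  classical
  -- dimension is positive
  have hd : 0 < d := by
    rcases Nat.eq_zero_or_pos d with h | h
    · exfalso; apply hT; subst h; ext i j; exact j.elim0
    · exact h
  haveI : Nonempty (Fin d) := ⟨⟨0, hd⟩⟩
  -- spectral setup
  have hPSD : (Tᵀ * T).PosSemidef := by
    have h := Matrix.posSemidef_conjTranspose_mul_self T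
    rwa [Matrix.conjTranspose_eq_transpose_of_trivial] at h
  have hA : (Tᵀ * T).IsHermitian := hPSD.isHermitian
  set ev : Fin d → ℝ := hPSD.1.eigenvalues with hevdef
  have hev0 : ∀ i, 0 ≤ ev i := fun i => hPSD.eigenvalues_nonneg i
  set U : Matrix (Fin d) (Fin d) ℝ := (hPSD.1.eigenvectorUnitary : Matrix (Fin d) (Fin d) ℝ)
    with hUdef
  obtain ⟨hU1, hU2⟩ : star U * U = 1 ∧ U * star U = 1 := by
    have h := hPSD.1.eigenvectorUnitary.2
    rw [Unitary.mem_iff] at h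
    exact h
  have hspec : Tᵀ * T = conjD U ev := by
    have h := hPSD.1.spectral_theorem
    simpa [conjD] using h
  -- `c • 1` as a conjugated diagonal
  have hsmul1 : ∀ c : ℝ, (c • 1 : Matrix (Fin d) (Fin d) ℝ) = conjD U (fun _ => c) := by
    intro c
    rw [← conjD_one U hU2, conjD_smul]
    simp
  have hshift : ∀ c : ℝ, (c • 1 - Tᵀ * T : Matrix (Fin d) (Fin d) ℝ)
      = conjD U (fun i => c - ev i) := by
    intro c
    rw [hsmul1 c, hspec, conjD_sub]
  -- the largest eigenvalue
  set lam : ℝ := Finset.univ.sup' Finset.univ_nonempty ev with hlamdef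
  have hlam_le : ∀ i, ev i ≤ lam := fun i => Finset.le_sup' ev (Finset.mem_univ i)
  obtain ⟨i0, -, hi0⟩ := Finset.exists_mem_eq_sup' (Finset.univ_nonempty) ev
  have hi0' : lam = ev i0 := by rw [hlamdef]; exact hi0
  have hlam0 : 0 ≤ lam := le_trans (hev0 i0) (hlam_le i0)
  -- positivity of the largest eigenvalue
  have htrA : (Tᵀ * T).trace = ∑ i, ev i := by rw [hspec, trace_conjD U hU1]
  have htrApos : 0 < (Tᵀ * T).trace := by
    obtain ⟨a, b, hab⟩ : ∃ a b, T a b ≠ 0 := by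
      by_contra h
      push_neg at h
      exact hT (by ext a b; simpa using h a b)
    have htr_eq : (Tᵀ * T).trace = ∑ i, ∑ j, T j i * T j i := by
      simp [Matrix.trace, Matrix.diag, Matrix.mul_apply, Matrix.transpose_apply]
    rw [htr_eq]
    refine Finset.sum_pos' (fun i _ => Finset.sum_nonneg fun j _ => mul_self_nonneg _)
      ⟨b, Finset.mem_univ b, Finset.sum_pos' (fun j _ => mul_self_nonneg _)
        ⟨a, Finset.mem_univ a, mul_self_pos.mpr hab⟩⟩
  have hlam_pos : 0 < lam := by
    by_contra h
    push_neg at h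
    have : ∀ i, ev i = 0 := fun i => le_antisymm ((hlam_le i).trans h) (hev0 i)
    rw [htrA] at htrApos
    simp [this] at htrApos
  -- opNormSq = lam
  have hopn : opNormSq T = lam := by
    have hset : {c : ℝ | 0 ≤ c ∧ (c • (1 : Matrix (Fin d) (Fin d) ℝ) - Tᵀ * T).PosSemidef}
        = Set.Ici lam := by
      ext c
      constructor
      · rintro ⟨hc0, hpsd⟩
        rw [hshift c] at hpsd
        have hcc := posSemidef_conjD U hU1 _ hpsd
        refine Set.mem_Ici.mpr (Finset.sup'_le _ _ fun i _ => ?_)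
        linarith [hcc i]
      · intro hc
        have hc' : lam ≤ c := hc
        refine ⟨hlam0.trans hc', ?_⟩
        rw [hshift c]
        exact conjD_posSemidef U _ fun i => by linarith [hlam_le i]
    rw [opNormSq, hset, csInf_Ici]
  -- the resolvent-type matrices
  set Bf : ℝ → Matrix (Fin d) (Fin d) ℝ := fun γ => conjD U (fun i => (γ - ev i)⁻¹) with hBfdef
  have hne_den : ∀ {γ : ℝ}, lam < γ → ∀ i, γ - ev i ≠ 0 := by
    intro γ hγ i
    have := hlam_le i
    intro hcon
    nlinarith
  have hpos_den : ∀ {γ : ℝ}, lam < γ → ∀ i, 0 < γ - ev i := by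
    intro γ hγ i
    have := hlam_le i
    linarith
  have h1 : ∀ {γ : ℝ}, lam < γ →
      ((γ • 1 : Matrix (Fin d) (Fin d) ℝ) - Tᵀ * T) * Bf γ = 1 := by
    intro γ hγ
    rw [hshift γ, hBfdef, conjD_mul U hU1]
    have : (fun i => (γ - ev i) * (γ - ev i)⁻¹) = fun _ : Fin d => (1:ℝ) := by
      funext i
      exact mul_inv_cancel₀ (hne_den hγ i)
    rw [this, conjD_one U hU2]
  have h2 : ∀ {γ : ℝ}, lam < γ →
      Bf γ * ((γ • 1 : Matrix (Fin d) (Fin d) ℝ) - Tᵀ * T) = 1 := by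
    intro γ hγ
    rw [hshift γ, hBfdef, conjD_mul U hU1]
    have : (fun i => (γ - ev i)⁻¹ * (γ - ev i)) = fun _ : Fin d => (1:ℝ) := by
      funext i
      exact inv_mul_cancel₀ (hne_den hγ i)
    rw [this, conjD_one U hU2]
  have hS : ∀ {γ : ℝ}, lam < γ →
      ((γ • 1 : Matrix (Fin d) (Fin d) ℝ) - Tᵀ * T).PosSemidef := by
    intro γ hγ
    rw [hshift γ]
    exact conjD_posSemidef U _ fun i => (hpos_den hγ i).le
  have hBt : ∀ γ : ℝ, (Bf γ)ᵀ = Bf γ := fun γ => conjD_transpose U _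
  have htrAB : ∀ {γ : ℝ}, lam < γ →
      ((Tᵀ * T) * Bf γ).trace = ∑ i, ev i * (γ - ev i)⁻¹ := by
    intro γ hγ
    rw [hspec, hBfdef, conjD_mul U hU1, trace_conjD U hU1]
  -- the dual objective as a scalar function
  set g : ℝ → ℝ := fun γ => γ * ρ^2 + γ * ∑ i, ev i * (γ - ev i)⁻¹ with hgdef
  -- rewrite the dual set
  have hdual : {v : ℝ | ∃ γ : ℝ, opNormSq T < γ ∧
      v = γ * ρ ^ 2 + γ * (((1 : Matrix (Fin r) (Fin r) ℝ) - γ⁻¹ • (T * Tᵀ))⁻¹ - 1).trace}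
      = {v : ℝ | ∃ γ : ℝ, lam < γ ∧ v = g γ} := by
    ext v
    constructor
    · rintro ⟨γ, hγ, rfl⟩
      rw [hopn] at hγ
      have hγ0 : γ ≠ 0 := ne_of_gt (lt_trans hlam_pos hγ)
      exact ⟨γ, hγ, by rw [dual_trace_eq T hγ0 (h1 hγ), htrAB hγ]⟩
    · rintro ⟨γ, hγ, rfl⟩
      have hγ0 : γ ≠ 0 := ne_of_gt (lt_trans hlam_pos hγ)
      refine ⟨γ, by rwa [hopn], ?_⟩
      rw [dual_trace_eq T hγ0 (h1 hγ), htrAB hγ]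
  -- weak duality
  have hwd : ∀ e ∈ wcSet T P0 ρ, ∀ γ : ℝ, lam < γ → e ≤ g γ := by
    rintro e ⟨P, hmem, rfl⟩ γ hγ
    have h := weak_duality T hP0 (le_of_lt hρ) (le_of_lt (lt_trans hlam_pos hγ)) hmem
      (hS hγ) (h1 hγ) (h2 hγ) (hBt γ)
    rwa [htrAB hγ] at h
  -- nonempty
  have hmemP0 : MemW2Ball P0 P0 ρ := by
    have h := (primal_value T hP0 (le_of_lt hρ) 1 (by simpa using sq_nonneg ρ)).1
    have hid : P0.map (fun y : Fin d → ℝ => (1 : Matrix (Fin d) (Fin d) ℝ).mulVec y) = P0 := by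
      have h0 : (fun y : Fin d → ℝ => (1 : Matrix (Fin d) (Fin d) ℝ).mulVec y)
          = id := by
        funext y; exact Matrix.one_mulVec y
      rw [h0, Measure.map_id]
    rwa [hid] at h
  have hne : (wcSet T P0 ρ).Nonempty := ⟨_, P0, hmemP0, rfl⟩
  have hmemD1 : lam < lam + 1 := by linarith
  have hbdd : BddAbove (wcSet T P0 ρ) := ⟨g (lam+1), fun e he => hwd e he (lam+1) hmemD1⟩
  -- IVT for the optimal γ
  set cf : ℝ → ℝ := fun γ => ∑ i, (ev i * (γ - ev i)⁻¹) * (ev i * (γ - ev i)⁻¹) with hcfdef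
  set γ₁ : ℝ := lam + lam / ρ with hγ₁def
  set γ₂ : ℝ := lam + (d : ℝ) * lam / ρ with hγ₂def
  have hd1 : (1 : ℝ) ≤ (d : ℝ) := by exact_mod_cast hd
  have hγ₁gt : lam < γ₁ := by
    rw [hγ₁def]
    have : 0 < lam / ρ := div_pos hlam_pos hρ
    linarith
  have h12 : γ₁ ≤ γ₂ := by
    rw [hγ₁def, hγ₂def]
    have h0 : lam / ρ ≤ (d:ℝ) * lam / ρ := by
      apply (div_le_div_iff_of_pos_right hρ).mpr
      nlinarith
    linarith
  have hγ₂gt : lam < γ₂ := lt_of_lt_of_le hγ₁gt h12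
  have hclow : ρ^2 ≤ cf γ₁ := by
    have hterm : ev i0 * (γ₁ - ev i0)⁻¹ = ρ := by
      rw [← hi0', hγ₁def]
      have : lam + lam / ρ - lam = lam / ρ := by ring
      rw [this]
      field_simp
    calc ρ^2 = (ev i0 * (γ₁ - ev i0)⁻¹) * (ev i0 * (γ₁ - ev i0)⁻¹) := by rw [hterm]; ring
      _ ≤ cf γ₁ := Finset.single_le_sum
          (f := fun i => (ev i * (γ₁ - ev i)⁻¹) * (ev i * (γ₁ - ev i)⁻¹))
          (fun i _ => mul_self_nonneg _) (Finset.mem_univ i0)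
  have hchigh : cf γ₂ ≤ ρ^2 := by
    have hden : γ₂ - lam = (d:ℝ) * lam / ρ := by rw [hγ₂def]; ring
    have hdenpos : 0 < (d:ℝ) * lam / ρ := by positivity
    have htb : ∀ i, ev i * (γ₂ - ev i)⁻¹ ≤ ρ / d := by
      intro i
      have hpi : 0 < γ₂ - ev i := hpos_den hγ₂gt i
      have hle : (γ₂ - ev i)⁻¹ ≤ ((d:ℝ) * lam / ρ)⁻¹ := by
        rw [← hden]
        exact inv_anti₀ (hden ▸ hdenpos) (by linarith [hlam_le i])
      have h0 : ev i * (γ₂ - ev i)⁻¹ ≤ lam * ((d:ℝ) * lam / ρ)⁻¹ := by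
        apply mul_le_mul (hlam_le i) hle (inv_nonneg.mpr hpi.le) hlam0
      have h1 : lam * ((d:ℝ) * lam / ρ)⁻¹ = ρ / d := by
        field_simp
      linarith
    have htnn : ∀ i, 0 ≤ ev i * (γ₂ - ev i)⁻¹ := fun i =>
      mul_nonneg (hev0 i) (inv_nonneg.mpr (hpos_den hγ₂gt i).le)
    have hsq : ∀ i, (ev i * (γ₂ - ev i)⁻¹) * (ev i * (γ₂ - ev i)⁻¹) ≤ (ρ/d) * (ρ/d) :=
      fun i => mul_le_mul (htb i) (htb i) (htnn i) (by positivity)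
    calc cf γ₂ ≤ ∑ _i : Fin d, (ρ/d) * (ρ/d) := Finset.sum_le_sum fun i _ => hsq i
      _ = (d:ℝ) * ((ρ/d) * (ρ/d)) := by rw [Finset.sum_const]; simp [nsmul_eq_mul]
      _ = ρ^2 / d := by field_simp
      _ ≤ ρ^2 := by
          rw [div_le_iff₀ (by positivity)]
          nlinarith [sq_nonneg ρ]
  have hcont : ContinuousOn cf (Set.Icc γ₁ γ₂) := by
    rw [hcfdef]
    apply continuousOn_finset_sum
    intro i _
    have hinv : ContinuousOn (fun γ : ℝ => (γ - ev i)⁻¹) (Set.Icc γ₁ γ₂) := by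
      apply ContinuousOn.inv₀
      · exact (continuousOn_id.sub continuousOn_const)
      · intro x hx
        exact hne_den (lt_of_lt_of_le hγ₁gt hx.1) i
    exact ((continuousOn_const.mul hinv).mul (continuousOn_const.mul hinv))
  obtain ⟨γs, hγsIcc, hcγs⟩ := intermediate_value_Icc' h12 hcont ⟨hchigh, hclow⟩
  have hγs_gt : lam < γs := lt_of_lt_of_le hγ₁gt hγsIcc.1
  have hγs_pos : 0 < γs := lt_trans hlam_pos hγs_gt
  -- the optimal pushforward matrix
  set L : Matrix (Fin d) (Fin d) ℝ := γs • Bf γs with hLdef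
  have hL : L = conjD U (fun i => γs * (γs - ev i)⁻¹) := by
    rw [hLdef, hBfdef, conjD_smul]
  have hL1 : L - 1 = conjD U (fun i => ev i * (γs - ev i)⁻¹) := by
    rw [hL, ← conjD_one U hU2, conjD_sub]
    refine congrArg (conjD U) (funext fun i => ?_)
    have hne0 : γs - ev i ≠ 0 := hne_den hγs_gt i
    field_simp
    ring
  have hcostL : ((L - 1)ᵀ * (L - 1)).trace = ρ^2 := by
    rw [hL1, conjD_transpose, conjD_mul U hU1, trace_conjD U hU1]
    exact hcγs
  have hTL : ((T * L)ᵀ * (T * L)).trace = g γs := by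
    have hassoc : (T * L)ᵀ * (T * L) = Lᵀ * ((Tᵀ * T) * L) := by
      rw [Matrix.transpose_mul]
      simp only [Matrix.mul_assoc]
    rw [hassoc, hL, conjD_transpose, hspec, conjD_mul U hU1, conjD_mul U hU1,
      trace_conjD U hU1]
    have hterm : ∀ i, (γs * (γs - ev i)⁻¹) * (ev i * (γs * (γs - ev i)⁻¹))
        = γs * ((ev i * (γs - ev i)⁻¹) * (ev i * (γs - ev i)⁻¹))
          + γs * (ev i * (γs - ev i)⁻¹) := by
      intro i
      have hne0 : γs - ev i ≠ 0 := hne_den hγs_gt i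
      field_simp
      ring
    calc ∑ i, (γs * (γs - ev i)⁻¹) * (ev i * (γs * (γs - ev i)⁻¹))
        = ∑ i, (γs * ((ev i * (γs - ev i)⁻¹) * (ev i * (γs - ev i)⁻¹))
            + γs * (ev i * (γs - ev i)⁻¹)) := Finset.sum_congr rfl fun i _ => hterm i
      _ = γs * cf γs + γs * ∑ i, ev i * (γs - ev i)⁻¹ := by
          rw [Finset.sum_add_distrib, ← Finset.mul_sum, ← Finset.mul_sum, hcfdef]
      _ = g γs := by rw [hcγs, hgdef]
  obtain ⟨hmemL, hvalL⟩ := primal_value T hP0 (le_of_lt hρ) L (le_of_eq hcostL)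
  have hgin : g γs ∈ wcSet T P0 ρ :=
    ⟨_, hmemL, (hvalL.trans hTL).symm⟩
  -- conclusion
  refine ⟨hne, hbdd, ?_⟩
  rw [hdual]
  have hDne : {v : ℝ | ∃ γ : ℝ, lam < γ ∧ v = g γ}.Nonempty := ⟨g (lam+1), lam+1, hmemD1, rfl⟩
  obtain ⟨e₀, he₀⟩ := hne
  have hDbdd : BddBelow {v : ℝ | ∃ γ : ℝ, lam < γ ∧ v = g γ} := by
    refine ⟨e₀, ?_⟩
    rintro v ⟨γ, hγ, rfl⟩
    exact hwd e₀ he₀ γ hγ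
  apply le_antisymm
  · refine csSup_le ⟨e₀, he₀⟩ fun e he => le_csInf hDne ?_
    rintro v ⟨γ, hγ, rfl⟩
    exact hwd e he γ hγ
  · calc sInf {v : ℝ | ∃ γ : ℝ, lam < γ ∧ v = g γ} ≤ g γs := csInf_le hDbdd ⟨γs, hγs_gt, rfl⟩
      _ ≤ sSup (wcSet T P0 ρ) := le_csSup hbdd hgin
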